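/- Suppose f(z₀, w₀) = 0, ∂f/∂z(z₀, w₀) = 0, and ∂f/∂w(z₀, w₀) = 0, and suppose w : U → ℂ is a function continuous at z₀ with w(z₀) = w₀, holomorphic on U ∖ {z₀}, satisfying f(z, w(z)) = 0, and differentiable at z₀. Then lim_{z→z₀} (-∂f/∂z(z, w(z)) / ∂f/∂w(z, w(z))) = w'(z₀), provided ∂f/∂w(z, w(z)) ≠ 0 for z ≠ z₀ near z₀. -/

import Mathlib

noncomputable def eval2 (F : Polynomial (Polynomial ℂ)) (z w : ℂ) : ℂ :=
  (F.map (Polynomial.evalRingHom z)).eval w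

open Polynomial Filter in
lemma eval2_eq_sum (F : Polynomial (Polynomial ℂ)) (z v : ℂ) :
    eval2 F z v = ∑ i ∈ F.support, (F.coeff i).eval z * v ^ i := by
  rw [eval2, eval_map, eval₂_eq_sum, Polynomial.sum_def]
  simp

open Polynomial in
lemma hasDerivAt_z (F : Polynomial (Polynomial ℂ)) (z v : ℂ) :
    HasDerivAt (fun z' => eval2 F z' v)
      (∑ i ∈ F.support, ((F.coeff i).derivative).eval z * v ^ i) z := by
  simp only [eval2_eq_sum]
  exact HasDerivAt.fun_sum fun i _ => ((F.coeff i).hasDerivAt z).mul_const (v ^ i)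

open Polynomial in
lemma hasDerivAt_w (F : Polynomial (Polynomial ℂ)) (z v : ℂ) :
    HasDerivAt (fun v' => eval2 F z v')
      (∑ i ∈ F.support, (F.coeff i).eval z * ((i : ℂ) * v ^ (i - 1))) v := by
  simp only [eval2_eq_sum]
  exact HasDerivAt.fun_sum fun i _ => (hasDerivAt_pow i v).const_mul ((F.coeff i).eval z)

/-- Removable-singularity derivative formula: at a point where `f`, `f_z`, `f_w`
all vanish, if `w` is a solution branch continuous at `z₀`, holomorphic off `z₀`,
and differentiable at `z₀`, then `-f_z/f_w` evaluated along the branch tends to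
`w'(z₀)` as `z → z₀` (provided `f_w ≠ 0` along the branch near `z₀`). -/
theorem removable_singularity_derivative
    (F : Polynomial (Polynomial ℂ)) (z₀ w₀ : ℂ)
    (hzero : eval2 F z₀ w₀ = 0)
    (hfz : deriv (fun z => eval2 F z w₀) z₀ = 0)
    (hfw : deriv (fun v => eval2 F z₀ v) w₀ = 0)
    (U : Set ℂ) (hU : IsOpen U) (hz₀U : z₀ ∈ U)
    (w : ℂ → ℂ) (hcont : ContinuousAt w z₀) (hw₀ : w z₀ = w₀)
    (hholo : DifferentiableOn ℂ w (U \ {z₀}))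
    (hsol : ∀ z ∈ U, eval2 F z (w z) = 0)
    (hdiff : DifferentiableAt ℂ w z₀)
    (hnz : ∀ᶠ z in nhdsWithin z₀ {z₀}ᶜ, deriv (fun v => eval2 F z v) (w z) ≠ 0) :
    Filter.Tendsto
      (fun z => -(deriv (fun z' => eval2 F z' (w z)) z) /
        (deriv (fun v => eval2 F z v) (w z)))
      (nhdsWithin z₀ {z₀}ᶜ) (nhds (deriv w z₀)) := by
  have hdiffU : DifferentiableOn ℂ w U :=
    (Complex.differentiableOn_compl_singleton_and_continuousAt_iff
      (hU.mem_nhds hz₀U)).mp ⟨hholo, hcont⟩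
  have hanal : AnalyticOnNhd ℂ w U := hdiffU.analyticOnNhd hU
  have hderivCont : ContinuousAt (deriv w) z₀ :=
    ((hanal.deriv) z₀ hz₀U).continuousAt
  have hUtend : ∀ᶠ z in nhdsWithin z₀ {z₀}ᶜ, z ∈ U :=
    nhdsWithin_le_nhds (hU.mem_nhds hz₀U)
  have key : ∀ᶠ z in nhdsWithin z₀ {z₀}ᶜ,
      (-(deriv (fun z' => eval2 F z' (w z)) z) /
        (deriv (fun v => eval2 F z v) (w z))) = deriv w z := by
    filter_upwards [hnz, hUtend] with z hz1 hzU
    have hw' : HasDerivAt w (deriv w z) z :=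
      (hdiffU.differentiableAt (hU.mem_nhds hzU)).hasDerivAt
    set Fz : ℂ := ∑ i ∈ F.support, ((F.coeff i).derivative).eval z * (w z) ^ i with hFz
    set Fw : ℂ := ∑ i ∈ F.support, (F.coeff i).eval z * ((i : ℂ) * (w z) ^ (i - 1)) with hFw
    have hchain : HasDerivAt (fun z' => eval2 F z' (w z')) (Fz + Fw * deriv w z) z := by
      have : HasDerivAt (fun z' => ∑ i ∈ F.support, (F.coeff i).eval z' * (w z') ^ i)
          (∑ i ∈ F.support, (((F.coeff i).derivative).eval z * (w z) ^ i +
            (F.coeff i).eval z * ((i : ℂ) * (w z) ^ (i - 1) * deriv w z))) z :=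
        HasDerivAt.fun_sum fun i _ =>
          ((F.coeff i).hasDerivAt z).fun_mul (hw'.fun_pow i)
      rw [Finset.sum_add_distrib] at this
      have heq : (∑ i ∈ F.support, (F.coeff i).eval z *
          ((i : ℂ) * (w z) ^ (i - 1) * deriv w z)) = Fw * deriv w z := by
        rw [hFw, Finset.sum_mul]
        exact Finset.sum_congr rfl fun i _ => by ring
      rw [heq] at this
      exact this.congr_of_eventuallyEq (by
        filter_upwards [] with z' using by rw [eval2_eq_sum])
    have hzero' : (fun z' => eval2 F z' (w z')) =ᶠ[nhds z] fun _ => 0 := by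
      filter_upwards [hU.mem_nhds hzU] with z' hz' using hsol z' hz'
    have h0 : HasDerivAt (fun _ : ℂ => (0 : ℂ)) (Fz + Fw * deriv w z) z :=
      hchain.congr_of_eventuallyEq hzero'.symm
    have hsum0 : Fz + Fw * deriv w z = 0 := by
      have := h0.deriv
      rw [deriv_const] at this
      exact this.symm
    have hFzval : deriv (fun z' => eval2 F z' (w z)) z = Fz := (hasDerivAt_z F z (w z)).deriv
    have hFwval : deriv (fun v => eval2 F z v) (w z) = Fw := (hasDerivAt_w F z (w z)).deriv
    rw [hFzval, hFwval]
    rw [hFwval] at hz1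
    field_simp
    linear_combination -hsum0
  exact ((hderivCont.tendsto).mono_left nhdsWithin_le_nhds).congr' (Filter.EventuallyEq.symm key)
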